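/- For every x ∈ ℝ, the maps j ↦ m⁻_j(x) and j ↦ m⁺_j(x) are strictly increasing on (0, ∞). Consequently, α⁻ and α⁺ are strictly increasing functions on (0, ∞). -/

import Mathlib

open MeasureTheory

lemma cube_eq {j : ℝ} (hj : 0 < j) : (j ^ ((2:ℝ)/3)) ^ 3 = j ^ 2 := by
  rw [← Real.rpow_natCast (j ^ ((2:ℝ)/3)) 3, ← Real.rpow_mul hj.le]
  norm_num

lemma f_anti {j s t : ℝ} (hj : 0 < j) (hs : 0 < s) (hst : s < t) (ht : t ≤ j ^ ((2:ℝ)/3)) :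
    j ^ 2 / (2 * t ^ 2) + t < j ^ 2 / (2 * s ^ 2) + s := by
  set A := j ^ ((2:ℝ)/3) with hA
  have hA0 : 0 < A := Real.rpow_pos_of_pos hj _
  have hj2 : j ^ 2 = A ^ 3 := (cube_eq hj).symm
  have ht0 : 0 < t := hs.trans hst
  have hsA : s < A := hst.trans_le ht
  rw [hj2, div_add' _ _ _ (by positivity), div_add' _ _ _ (by positivity),
    div_lt_div_iff₀ (by positivity) (by positivity)]
  have h1 : 2*(s*t) < A*(s+t) := by nlinarith
  have h0 : s*t < A*A := by nlinarith
  have h2 : s*t*(s*t) ≤ (A*A)*(s*t) := mul_le_mul_of_nonneg_right h0.le (mul_pos hs ht0).le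
  have h3 : 0 < A^3*(s+t) - 2*(s*t)^2 := by nlinarith [mul_pos hs ht0, mul_pos hA0 hA0]
  have h4 := mul_pos (sub_pos.mpr hst) h3
  nlinarith [h4]

lemma f_mono {j s t : ℝ} (hj : 0 < j) (hs : j ^ ((2:ℝ)/3) ≤ s) (hst : s < t) :
    j ^ 2 / (2 * s ^ 2) + s < j ^ 2 / (2 * t ^ 2) + t := by
  set A := j ^ ((2:ℝ)/3) with hA
  have hA0 : 0 < A := Real.rpow_pos_of_pos hj _
  have hj2 : j ^ 2 = A ^ 3 := (cube_eq hj).symm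
  have hs0 : 0 < s := hA0.trans_le hs
  have ht0 : 0 < t := hs0.trans hst
  have htA : A < t := hs.trans_lt hst
  rw [hj2, div_add' _ _ _ (by positivity), div_add' _ _ _ (by positivity),
    div_lt_div_iff₀ (by positivity) (by positivity)]
  have h1 : A*(s+t) < 2*(s*t) := by nlinarith
  have h0 : A*A < s*t := by nlinarith
  have h2 : (A*A)*(s*t) ≤ s*t*(s*t) := mul_le_mul_of_nonneg_right h0.le (mul_pos hs0 ht0).le
  have h3 : 0 < 2*(s*t)^2 - A^3*(s+t) := by nlinarith [mul_pos hs0 ht0, mul_pos hA0 hA0]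
  have h4 := mul_pos (sub_pos.mpr hst) h3
  nlinarith [h4]

/-- A function of the form "monotone function of `V`" is measurable when `V` is continuous. -/
lemma meas_aux {V f : ℝ → ℝ} (hV : Continuous V) (hf0 : ∀ x, 0 ≤ f x)
    (hC : ∃ C, ∀ x, f x ≤ C) (hrel : ∀ x y, V x ≤ V y → f x ≤ f y) : Measurable f := by
  obtain ⟨C, hC⟩ := hC
  set g : ℝ → ℝ := fun v => sSup (f '' {x | V x ≤ v}) with hg
  have hbdd : ∀ v, BddAbove (f '' {x | V x ≤ v}) := fun v =>
    ⟨C, by rintro _ ⟨x, -, rfl⟩; exact hC x⟩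
  have hgeq : ∀ y, g (V y) = f y := fun y =>
    IsGreatest.csSup_eq ⟨⟨y, Set.mem_setOf.mpr le_rfl, rfl⟩, by rintro _ ⟨x, hx, rfl⟩; exact hrel x y hx⟩
  have hgm : Monotone g := by
    intro v1 v2 h12
    by_cases hne : ({x | V x ≤ v1}).Nonempty
    · exact csSup_le_csSup (hbdd v2) (hne.image f)
        (Set.image_mono (f := f) (fun x hx => le_trans hx h12))
    · have hemp : {x | V x ≤ v1} = ∅ := Set.not_nonempty_iff_eq_empty.mp hne
      simp only [hg, hemp, Set.image_empty, Real.sSup_empty]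
      by_cases hne2 : ({x | V x ≤ v2}).Nonempty
      · obtain ⟨x, hx⟩ := hne2
        exact le_trans (hf0 x) (le_csSup (hbdd v2) ⟨x, hx, rfl⟩)
      · simp [Set.not_nonempty_iff_eq_empty.mp hne2, Real.sSup_empty]
  have : f = g ∘ V := funext fun y => (hgeq y).symm
  rw [this]
  exact hgm.measurable.comp hV.measurable

lemma ii_aux {f : ℝ → ℝ} (hf : Measurable f) {C : ℝ} (hC : ∀ x, ‖f x‖ ≤ C) :
    IntervalIntegrable f volume 0 1 := by
  rw [intervalIntegrable_iff]
  exact Measure.integrableOn_of_bounded measure_Ioc_lt_top.ne hf.aestronglyMeasurable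
    (Filter.Eventually.of_forall hC)

lemma key1 {A1 A2 t : ℝ} (h0 : 0 < A1) (h12 : A1 < A2) (ht : 0 < t) (htA : t ≤ A1) :
    (3:ℝ)/2 * (A2 - A1) < (A2 ^ 3 - A1 ^ 3) / (2 * t ^ 2) := by
  rw [lt_div_iff₀ (by positivity)]
  have ht1sq : t ^ 2 ≤ A1 ^ 2 := by nlinarith
  have h1 : (0:ℝ) < A2^2 + A1*A2 + A1^2 - 3*A1^2 := by
    nlinarith [mul_pos (sub_pos.mpr h12) (by linarith : (0:ℝ) < A2 + 2*A1)]
  nlinarith [mul_pos (sub_pos.mpr h12) h1,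
    mul_nonneg (sub_pos.mpr h12).le (sub_nonneg.mpr ht1sq)]

lemma key2 {A1 A2 t : ℝ} (h0 : 0 < A1) (h12 : A1 < A2) (ht : A2 ≤ t) :
    (A2 ^ 3 - A1 ^ 3) / (2 * t ^ 2) < (3:ℝ)/2 * (A2 - A1) := by
  have ht0 : 0 < t := (h0.trans h12).trans_le ht
  rw [div_lt_iff₀ (by positivity)]
  have ht2sq : A2 ^ 2 ≤ t ^ 2 := by nlinarith
  have h1 : (0:ℝ) < 3*A2^2 - (A2^2 + A1*A2 + A1^2) := by
    nlinarith [mul_pos (sub_pos.mpr h12) (by linarith : (0:ℝ) < 2*A2 + A1)]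
  nlinarith [mul_pos (sub_pos.mpr h12) h1,
    mul_nonneg (sub_pos.mpr h12).le (sub_nonneg.mpr ht2sq)]

theorem stmt_10
    (V : ℝ → ℝ) (hVc : Continuous V) (hVp : Function.Periodic V 1)
    (M : ℝ) (hM : IsGreatest (Set.range V) M)
    (mm mp : ℝ → ℝ → ℝ)
    (hmm : ∀ j x, 0 < j →
      0 < mm j x ∧ mm j x ≤ j ^ ((2:ℝ)/3) ∧
      j ^ 2 / (2 * (mm j x) ^ 2) + mm j x = (M + 3 / 2 * j ^ ((2:ℝ)/3)) - V x)
    (hmp : ∀ j x, 0 < j →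
      j ^ ((2:ℝ)/3) ≤ mp j x ∧
      j ^ 2 / (2 * (mp j x) ^ 2) + mp j x = (M + 3 / 2 * j ^ ((2:ℝ)/3)) - V x) :
    (∀ x, StrictMonoOn (fun j => mm j x) (Set.Ioi 0) ∧
      StrictMonoOn (fun j => mp j x) (Set.Ioi 0)) ∧
    StrictMonoOn (fun j => ∫ x in (0:ℝ)..1, mm j x) (Set.Ioi 0) ∧
    StrictMonoOn (fun j => ∫ x in (0:ℝ)..1, mp j x) (Set.Ioi 0) := by
  -- pointwise strict monotonicity, minus branch
  have Hmm : ∀ x, ∀ j1 ∈ Set.Ioi (0:ℝ), ∀ j2 ∈ Set.Ioi (0:ℝ), j1 < j2 → mm j1 x < mm j2 x := by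
    intro x j1 hj1 j2 hj2 h12
    simp only [Set.mem_Ioi] at hj1 hj2
    set A1 := j1 ^ ((2:ℝ)/3) with hA1
    set A2 := j2 ^ ((2:ℝ)/3) with hA2
    have hA12 : A1 < A2 := Real.rpow_lt_rpow hj1.le h12 (by norm_num)
    have hA10 : 0 < A1 := Real.rpow_pos_of_pos hj1 _
    obtain ⟨hp1, hle1, heq1⟩ := hmm j1 x hj1
    obtain ⟨hp2, hle2, heq2⟩ := hmm j2 x hj2
    set t1 := mm j1 x
    set t2 := mm j2 x
    have ht1A2 : t1 ≤ A2 := hle1.trans hA12.le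
    -- f₂(t1) > H₂ − V x
    have hcube : j2 ^ 2 - j1 ^ 2 = A2 ^ 3 - A1 ^ 3 := by
      rw [cube_eq hj1, cube_eq hj2]
    have hkey : (3:ℝ)/2 * (A2 - A1) < (A2 ^ 3 - A1 ^ 3) / (2 * t1 ^ 2) :=
      key1 hA10 hA12 hp1 hle1
    have hgt : (M + 3 / 2 * A2) - V x < j2 ^ 2 / (2 * t1 ^ 2) + t1 := by
      have : j2 ^ 2 / (2 * t1 ^ 2) = j1 ^ 2 / (2 * t1 ^ 2) + (A2 ^ 3 - A1 ^ 3) / (2 * t1 ^ 2) := by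
        rw [← add_div, ← hcube]; ring_nf
      rw [this]
      linarith [hkey, heq1]
    rcases lt_trichotomy t1 t2 with h | h | h
    · exact h
    · exfalso; rw [← h] at heq2; linarith [hgt, heq2]
    · exfalso
      have := f_anti hj2 hp2 h ht1A2
      rw [heq2] at this
      linarith
  -- pointwise strict monotonicity, plus branch
  have Hmp : ∀ x, ∀ j1 ∈ Set.Ioi (0:ℝ), ∀ j2 ∈ Set.Ioi (0:ℝ), j1 < j2 → mp j1 x < mp j2 x := by
    intro x j1 hj1 j2 hj2 h12
    simp only [Set.mem_Ioi] at hj1 hj2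
    set A1 := j1 ^ ((2:ℝ)/3) with hA1
    set A2 := j2 ^ ((2:ℝ)/3) with hA2
    have hA12 : A1 < A2 := Real.rpow_lt_rpow hj1.le h12 (by norm_num)
    have hA10 : 0 < A1 := Real.rpow_pos_of_pos hj1 _
    have hA20 : 0 < A2 := hA10.trans hA12
    obtain ⟨hge1, heq1⟩ := hmp j1 x hj1
    obtain ⟨hge2, heq2⟩ := hmp j2 x hj2
    set t1 := mp j1 x
    set t2 := mp j2 x
    have ht2A1 : A1 ≤ t2 := hA12.le.trans hge2
    have ht20 : 0 < t2 := hA20.trans_le hge2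
    have hcube : j2 ^ 2 - j1 ^ 2 = A2 ^ 3 - A1 ^ 3 := by
      rw [cube_eq hj1, cube_eq hj2]
    have hkey : (A2 ^ 3 - A1 ^ 3) / (2 * t2 ^ 2) < (3:ℝ)/2 * (A2 - A1) :=
      key2 hA10 hA12 hge2
    have hgt : (M + 3 / 2 * A1) - V x < j1 ^ 2 / (2 * t2 ^ 2) + t2 := by
      have : j1 ^ 2 / (2 * t2 ^ 2) = j2 ^ 2 / (2 * t2 ^ 2) - (A2 ^ 3 - A1 ^ 3) / (2 * t2 ^ 2) := by
        rw [div_sub_div_same, ← hcube]; ring_nf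
      rw [this]
      linarith [hkey, heq2]
    rcases lt_trichotomy t1 t2 with h | h | h
    · exact h
    · exfalso; rw [h] at heq1; linarith [hgt, heq1]
    · exfalso
      have := f_mono hj1 ht2A1 h
      rw [heq1] at this
      linarith
  -- global lower bound for V
  obtain ⟨z, hz, hzmin⟩ := isCompact_Icc.exists_isMinOn (Set.nonempty_Icc.mpr zero_le_one)
    hVc.continuousOn
  have hlow : ∀ x, V z ≤ V x := by
    intro x
    obtain ⟨y, hy, hxy⟩ := hVp.exists_mem_Ico₀ one_pos x
    rw [hxy]
    exact hzmin (Set.Ico_subset_Icc_self hy)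
  -- integrability of the minus branch
  have intmm : ∀ j, 0 < j → IntervalIntegrable (fun x => mm j x) volume 0 1 := by
    intro j hj
    have hrel : ∀ x y, V x ≤ V y → mm j x ≤ mm j y := by
      intro x y hxy
      by_contra hcon
      push_neg at hcon
      have := f_anti hj (hmm j y hj).1 hcon (hmm j x hj).2.1
      rw [(hmm j x hj).2.2, (hmm j y hj).2.2] at this
      linarith
    have hme : Measurable (fun x => mm j x) :=
      meas_aux hVc (fun x => (hmm j x hj).1.le) ⟨j ^ ((2:ℝ)/3), fun x => (hmm j x hj).2.1⟩ hrel
    refine ii_aux hme (C := j ^ ((2:ℝ)/3)) fun x => ?_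
    rw [Real.norm_eq_abs, abs_le]
    exact ⟨by linarith [(hmm j x hj).1, Real.rpow_pos_of_pos hj ((2:ℝ)/3)], (hmm j x hj).2.1⟩
  -- integrability of the plus branch
  have intmp : ∀ j, 0 < j → IntervalIntegrable (fun x => mp j x) volume 0 1 := by
    intro j hj
    have hA0 : 0 < j ^ ((2:ℝ)/3) := Real.rpow_pos_of_pos hj _
    have hrel : ∀ x y, (-V) x ≤ (-V) y → mp j x ≤ mp j y := by
      intro x y hxy
      simp only [Pi.neg_apply, neg_le_neg_iff] at hxy
      by_contra hcon
      push_neg at hcon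
      have := f_mono hj (hmp j y hj).1 hcon
      rw [(hmp j x hj).2, (hmp j y hj).2] at this
      linarith
    have hub : ∀ x, mp j x ≤ M + 3 / 2 * j ^ ((2:ℝ)/3) - V z := by
      intro x
      have heq := (hmp j x hj).2
      have hd : 0 ≤ j ^ 2 / (2 * (mp j x) ^ 2) := by positivity
      have := hlow x
      linarith
    have hme : Measurable (fun x => mp j x) :=
      meas_aux hVc.neg (fun x => (hA0.trans_le (hmp j x hj).1).le)
        ⟨M + 3 / 2 * j ^ ((2:ℝ)/3) - V z, hub⟩ hrel
    refine ii_aux hme (C := M + 3 / 2 * j ^ ((2:ℝ)/3) - V z) fun x => ?_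
    rw [Real.norm_eq_abs, abs_le]
    have h1 : 0 < mp j x := hA0.trans_le (hmp j x hj).1
    exact ⟨by linarith [hub x], hub x⟩
  refine ⟨fun x => ⟨Hmm x, Hmp x⟩, ?_, ?_⟩
  · intro j1 hj1 j2 hj2 h12
    have hpos := intervalIntegral.intervalIntegral_pos_of_pos (f := fun x => mm j2 x - mm j1 x)
      (((intmm j2 hj2).sub (intmm j1 hj1)))
      (fun x => sub_pos.mpr (Hmm x j1 hj1 j2 hj2 h12)) zero_lt_one
    rw [intervalIntegral.integral_sub (intmm j2 hj2) (intmm j1 hj1)] at hpos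
    simpa using sub_pos.mp (by linarith)
  · intro j1 hj1 j2 hj2 h12
    have hpos := intervalIntegral.intervalIntegral_pos_of_pos (f := fun x => mp j2 x - mp j1 x)
      (((intmp j2 hj2).sub (intmp j1 hj1)))
      (fun x => sub_pos.mpr (Hmp x j1 hj1 j2 hj2 h12)) zero_lt_one
    rw [intervalIntegral.integral_sub (intmp j2 hj2) (intmp j1 hj1)] at hpos
    simpa using sub_pos.mp (by linarith)
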